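/- For n ≥ 1, the number of proper partitions of the complete tripartite graph K_{n,n,n} into exactly 5 independent sets equals 3·S(n,2)^2 + 3·S(n,3), which equals (1/4)·(18 − 18·2^n + 2·3^n + 3·4^n). -/

import Mathlib

/-- Stirling numbers of the second kind. -/
def stirling : ℕ → ℕ → ℕ
  | 0, 0 => 1
  | 0, _ + 1 => 0
  | _ + 1, 0 => 0
  | n + 1, k + 1 => (k + 1) * stirling n (k + 1) + stirling n k


open Finset

section PartA
variable {α : Type*} [DecidableEq α]

variable {α : Type*} [DecidableEq α]

lemma erase_injOn_parts {s : Finset α} (P : Finpartition s) (a : α) :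
    ∀ p ∈ P.parts, ∀ q ∈ P.parts, p.erase a = q.erase a → p = q := by
  intro p hp q hq h
  rcases (p.erase a).eq_empty_or_nonempty with he | ⟨x, hx⟩
  · have hp1 : p = {a} := by
      have := P.nonempty_of_mem_parts hp
      obtain ⟨y, hy⟩ := this
      have : y = a := by
        by_contra hne
        exact absurd (Finset.mem_erase.2 ⟨hne, hy⟩) (by simp [he])
      subst this
      apply Finset.eq_singleton_iff_unique_mem.2 ⟨hy, fun z hz => ?_⟩
      by_contra hne
      exact absurd (Finset.mem_erase.2 ⟨hne, hz⟩) (by simp [he])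
    have hq1 : q = {a} := by
      have := P.nonempty_of_mem_parts hq
      obtain ⟨y, hy⟩ := this
      have : y = a := by
        by_contra hne
        exact absurd (Finset.mem_erase.2 ⟨hne, hy⟩) (by simp [← h, he])
      subst this
      apply Finset.eq_singleton_iff_unique_mem.2 ⟨hy, fun z hz => ?_⟩
      by_contra hne
      exact absurd (Finset.mem_erase.2 ⟨hne, hz⟩) (by simp [← h, he])
    rw [hp1, hq1]
  · have hxq : x ∈ q := (Finset.erase_subset _ _) (h ▸ hx)
    exact P.eq_of_mem_parts hp hq ((Finset.erase_subset _ _) hx) hxq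

/-- Remove the point `a` from a partition of `insert a s`. -/
def removePt (a : α) {s : Finset α} (ha : a ∉ s) (P : Finpartition (insert a s)) :
    Finpartition s :=
  Finpartition.ofErase (P.parts.image (·.erase a))
    (by
      rw [Finset.supIndep_iff_pairwiseDisjoint]
      rintro e he f hf hef
      simp only [Finset.mem_coe, Finset.mem_image] at he hf
      obtain ⟨p, hp, rfl⟩ := he
      obtain ⟨q, hq, rfl⟩ := hf
      have hpq : p ≠ q := fun h => hef (by rw [h])
      exact (P.disjoint hp hq hpq).mono (Finset.erase_subset _ _) (Finset.erase_subset _ _))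
    (by
      ext x
      rw [Finset.mem_sup]
      constructor
      · rintro ⟨e, he, hx⟩
        simp only [Finset.mem_image] at he
        obtain ⟨p, hp, rfl⟩ := he
        simp only [id] at hx
        have hxa := Finset.ne_of_mem_erase hx
        have : x ∈ insert a s := P.le hp ((Finset.erase_subset _ _) hx)
        simp only [Finset.mem_insert] at this
        tauto
      · intro hx
        have hxi : x ∈ insert a s := Finset.mem_insert_of_mem hx
        obtain ⟨p, hp, hxp⟩ := P.exists_mem hxi
        exact ⟨p.erase a, Finset.mem_image_of_mem _ hp,
          Finset.mem_erase.2 ⟨fun h => ha (h ▸ hx), hxp⟩⟩)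

lemma removePt_parts (a : α) {s : Finset α} (ha : a ∉ s) (P : Finpartition (insert a s)) :
    (removePt a ha P).parts = (P.parts.image (·.erase a)).erase ∅ := rfl

/-- Add the point `a` into the part `p` of a partition of `s`. -/
def addPt (a : α) {s : Finset α} (ha : a ∉ s) (Q : Finpartition s) (p : Finset α)
    (hp : p ∈ Q.parts) : Finpartition (insert a s) where
  parts := insert (insert a p) (Q.parts.erase p)
  supIndep := by
    rw [Finset.supIndep_iff_pairwiseDisjoint]
    have key : ∀ q ∈ Q.parts.erase p, Disjoint (insert a p) q := by
      intro q hq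
      rw [Finset.disjoint_insert_left]
      refine ⟨fun h => ha (Q.le (Finset.mem_of_mem_erase hq) h), ?_⟩
      exact Q.disjoint hp (Finset.mem_of_mem_erase hq) (Ne.symm (Finset.ne_of_mem_erase hq))
    rintro e he f hf hef
    simp only [Finset.coe_insert, Set.mem_insert_iff, Finset.mem_coe] at he hf
    rcases he with rfl | he <;> rcases hf with rfl | hf
    · exact absurd rfl hef
    · exact key _ hf
    · exact (key _ he).symm
    · exact Q.disjoint (Finset.mem_of_mem_erase he) (Finset.mem_of_mem_erase hf)
        (fun h => hef (by rw [h]))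
  sup_parts := by
    ext x
    simp only [Finset.mem_sup, Finset.mem_insert, id]
    constructor
    · rintro ⟨e, rfl | he, hx⟩
      · simp only [Finset.mem_insert] at hx
        rcases hx with rfl | hx
        · exact Or.inl rfl
        · exact Or.inr (Q.le hp hx)
      · exact Or.inr (Q.le (Finset.mem_of_mem_erase he) hx)
    · rintro (rfl | hx)
      · exact ⟨insert x p, Or.inl rfl, Finset.mem_insert_self _ _⟩
      · obtain ⟨q, hq, hxq⟩ := Q.exists_mem hx
        by_cases hqp : q = p
        · exact ⟨insert a p, Or.inl rfl, Finset.mem_insert_of_mem (hqp ▸ hxq)⟩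
        · exact ⟨q, Or.inr (Finset.mem_erase.2 ⟨hqp, hq⟩), hxq⟩
  bot_notMem := by
    simp only [Finset.bot_eq_empty, Finset.mem_insert, not_or]
    constructor
    · exact fun h => (Finset.insert_nonempty a p).ne_empty h.symm
    · exact fun h => Q.bot_notMem (Finset.mem_of_mem_erase h)

lemma part_eq_singleton_of_erase_empty {t : Finset α} {P : Finpartition t} {p : Finset α}
    (hp : p ∈ P.parts) (a : α) (h : p.erase a = ∅) : p = {a} := by
  rcases (Finset.erase_eq_empty_iff p a).1 h with h1 | h1
  · exact absurd h1 (P.nonempty_of_mem_parts hp).ne_empty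
  · exact h1

lemma empty_mem_image_erase_iff {t : Finset α} (P : Finpartition t) (a : α) :
    ∅ ∈ P.parts.image (·.erase a) ↔ {a} ∈ P.parts := by
  constructor
  · intro h
    obtain ⟨p, hp, hpe⟩ := Finset.mem_image.1 h
    exact (part_eq_singleton_of_erase_empty hp a hpe) ▸ hp
  · intro h
    exact Finset.mem_image.2 ⟨{a}, h, Finset.erase_singleton a⟩

lemma card_image_erase {t : Finset α} (P : Finpartition t) (a : α) :
    (P.parts.image (·.erase a)).card = P.parts.card :=
  Finset.card_image_of_injOn (fun p hp q hq h => erase_injOn_parts P a p hp q hq h)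

lemma a_notMem_of_mem_parts {s : Finset α} (ha : a ∉ s) {Q : Finpartition s} {q : Finset α}
    (hq : q ∈ Q.parts) : a ∉ q := fun h => ha (Q.le hq h)

private lemma sig_ext {k : ℕ} {s : Finset α}
    {x y : Σ _Q : {Q : Finpartition s // Q.parts.card = k + 1}, {p : Finset α // p ∈ _Q.1.parts}}
    (h1 : x.1.1 = y.1.1) (h2 : x.2.1 = y.2.1) : x = y := by
  obtain ⟨⟨Q, hQ⟩, ⟨p, hp⟩⟩ := x
  obtain ⟨⟨Q', hQ'⟩, ⟨p', hp'⟩⟩ := y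
  dsimp at h1 h2
  subst h1
  subst h2
  rfl

def stepEquiv (a : α) (s : Finset α) (ha : a ∉ s) (k : ℕ) :
    {P : Finpartition (insert a s) // P.parts.card = k + 1} ≃
      (Σ _Q : {Q : Finpartition s // Q.parts.card = k + 1},
        {p : Finset α // p ∈ _Q.1.parts}) ⊕
      {Q : Finpartition s // Q.parts.card = k} where
  toFun := fun ⟨P, hP⟩ =>
    if h : {a} ∈ P.parts then
      Sum.inr ⟨removePt a ha P, by
        rw [removePt_parts, Finset.card_erase_of_mem ((empty_mem_image_erase_iff P a).2 h),
          card_image_erase, hP]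
        omega⟩
    else
      Sum.inl ⟨⟨removePt a ha P, by
          rw [removePt_parts,
            Finset.erase_eq_of_notMem (fun hc => h ((empty_mem_image_erase_iff P a).1 hc)),
            card_image_erase, hP]⟩,
        ⟨(P.part a).erase a, by
          rw [removePt_parts]
          refine Finset.mem_erase.2 ⟨fun hc => ?_, Finset.mem_image_of_mem _
            (P.part_mem.2 (Finset.mem_insert_self a s))⟩
          exact h ((part_eq_singleton_of_erase_empty (P.part_mem.2 (Finset.mem_insert_self a s)) a hc)
            ▸ P.part_mem.2 (Finset.mem_insert_self a s))⟩⟩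
  invFun := fun x =>
    match x with
    | Sum.inr ⟨Q, hQ⟩ =>
      ⟨Q.extend (b := {a}) (Finset.singleton_ne_empty a)
          (Finset.disjoint_singleton_right.2 ha)
          (by rw [Finset.sup_eq_union, Finset.union_comm, ← Finset.insert_eq]),
        by rw [Finpartition.card_extend, hQ]⟩
    | Sum.inl ⟨⟨Q, hQ⟩, ⟨p, hp⟩⟩ =>
      ⟨addPt a ha Q p hp, by
        show (insert (insert a p) (Q.parts.erase p)).card = k + 1
        rw [Finset.card_insert_of_notMem (fun hc =>
          (a_notMem_of_mem_parts ha (Finset.mem_of_mem_erase hc)) (Finset.mem_insert_self a p)),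
          Finset.card_erase_of_mem hp, hQ]
        omega⟩
  left_inv := by
    rintro ⟨P, hP⟩
    by_cases h : {a} ∈ P.parts
    · simp only [h, dif_pos]
      apply Subtype.ext
      apply Finpartition.ext
      show insert {a} ((removePt a ha P).parts) = P.parts
      rw [removePt_parts]
      ext q
      simp only [Finset.mem_insert, Finset.mem_erase, Finset.mem_image]
      constructor
      · rintro (rfl | ⟨hne, p, hp, rfl⟩)
        · exact h
        · have hap : a ∉ p := fun hap => hne (by
            rw [P.eq_of_mem_parts hp h hap (Finset.mem_singleton_self a), Finset.erase_singleton])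
          rwa [Finset.erase_eq_of_notMem hap]
      · intro hq
        by_cases hqa : q = {a}
        · exact Or.inl hqa
        · have hap : a ∉ q := fun hap => hqa (P.eq_of_mem_parts hq h hap
            (Finset.mem_singleton_self a))
          exact Or.inr ⟨(P.nonempty_of_mem_parts hq).ne_empty, q, hq,
            Finset.erase_eq_of_notMem hap⟩
    · simp only [h, dif_neg, not_false_iff]
      apply Subtype.ext
      apply Finpartition.ext
      have hta : a ∈ P.part a := P.mem_part (Finset.mem_insert_self a s)
      have htp : P.part a ∈ P.parts := P.part_mem.2 (Finset.mem_insert_self a s)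
      show insert (insert a ((P.part a).erase a)) (((removePt a ha P).parts).erase _) = P.parts
      rw [Finset.insert_erase hta, removePt_parts]
      ext q
      simp only [Finset.mem_insert, Finset.mem_erase, Finset.mem_image]
      constructor
      · rintro (rfl | ⟨hne1, hne2, p, hp, rfl⟩)
        · exact htp
        · have hap : a ∉ p := by
            intro hap
            exact hne1 (by rw [P.eq_of_mem_parts hp htp hap hta])
          rwa [Finset.erase_eq_of_notMem hap]
      · intro hq
        by_cases hqt : q = P.part a
        · exact Or.inl hqt
        · have hap : a ∉ q := fun hap => hqt (P.part_eq_of_mem hq hap).symm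
          refine Or.inr ⟨?_, (P.nonempty_of_mem_parts hq).ne_empty, q, hq,
            Finset.erase_eq_of_notMem hap⟩
          intro hc
          subst hc
          obtain ⟨x, hx⟩ := P.nonempty_of_mem_parts hq
          exact hqt (P.eq_of_mem_parts hq htp hx (Finset.mem_erase.1 hx).2)
  right_inv := by
    rintro (⟨⟨Q, hQ⟩, ⟨p, hp⟩⟩ | ⟨Q, hQ⟩)
    · have hp' : p ∈ Q.parts := hp
      have hap : a ∉ p := a_notMem_of_mem_parts ha hp'
      have hmem : insert a p ∈ (addPt a ha Q p hp').parts := Finset.mem_insert_self _ _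
      have hno : {a} ∉ (addPt a ha Q p hp').parts := by
        intro hc
        rcases Finset.mem_insert.1 hc with hc | hc
        · obtain ⟨x, hx⟩ := Q.nonempty_of_mem_parts hp'
          have : x ∈ ({a} : Finset α) := by rw [hc]; exact Finset.mem_insert_of_mem hx
          rw [Finset.mem_singleton] at this
          exact hap (this ▸ hx)
        · exact ha (Q.le (Finset.mem_of_mem_erase hc) (Finset.mem_singleton_self a))
      simp only [hno, dif_neg, not_false_iff]
      have hpart : (addPt a ha Q p hp').part a = insert a p :=
        Finpartition.part_eq_of_mem _ hmem (Finset.mem_insert_self a p)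
      have hparts : (removePt a ha (addPt a ha Q p hp')).parts = Q.parts := by
        rw [removePt_parts]
        ext q
        simp only [Finset.mem_erase, Finset.mem_image]
        constructor
        · rintro ⟨hne, e, he, rfl⟩
          rcases Finset.mem_insert.1 he with rfl | he
          · rw [Finset.erase_insert hap]; exact hp'
          · rw [Finset.erase_eq_of_notMem
              (a_notMem_of_mem_parts ha (Finset.mem_of_mem_erase he))]
            exact Finset.mem_of_mem_erase he
        · intro hq
          by_cases hqp : q = p
          · subst hqp
            exact ⟨(Q.nonempty_of_mem_parts hq).ne_empty,
              insert a q, Finset.mem_insert_self _ _, Finset.erase_insert hap⟩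
          · exact ⟨(Q.nonempty_of_mem_parts hq).ne_empty, q,
              Finset.mem_insert_of_mem (Finset.mem_erase.2 ⟨hqp, hq⟩),
              Finset.erase_eq_of_notMem (a_notMem_of_mem_parts ha hq)⟩
      congr 1
      apply sig_ext
      · exact Finpartition.ext hparts
      · show ((addPt a ha Q p hp').part a).erase a = p
        rw [hpart, Finset.erase_insert hap]
    · have hmem : {a} ∈ (Q.extend (b := {a}) (Finset.singleton_ne_empty a)
          (Finset.disjoint_singleton_right.2 ha)
          (by rw [Finset.sup_eq_union, Finset.union_comm, ← Finset.insert_eq])).parts :=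
        Finset.mem_insert_self _ _
      simp only [hmem, dif_pos]
      congr 1
      apply Subtype.ext
      apply Finpartition.ext
      rw [removePt_parts]
      ext q
      simp only [Finset.mem_erase, Finset.mem_image]
      constructor
      · rintro ⟨hne, e, he, rfl⟩
        rcases Finset.mem_insert.1 he with rfl | he
        · exact absurd (Finset.erase_singleton a) hne
        · rw [Finset.erase_eq_of_notMem (a_notMem_of_mem_parts ha he)]
          exact he
      · intro hq
        exact ⟨(Q.nonempty_of_mem_parts hq).ne_empty, q, Finset.mem_insert_of_mem hq,
          Finset.erase_eq_of_notMem (a_notMem_of_mem_parts ha hq)⟩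

instance finpartitionFinite {β : Type*} [Lattice β] [OrderBot β] [Finite β] (b : β) :
    Finite (Finpartition b) := by
  have := Fintype.ofFinite β
  have : Finite (Finset β) := inferInstance
  exact Finite.of_injective Finpartition.parts fun P Q h => Finpartition.ext h

theorem card_finpartition {α : Type*} [Fintype α] [DecidableEq α] (s : Finset α) (k : ℕ) :
    Nat.card {P : Finpartition s // P.parts.card = k} = stirling s.card k := by
  induction s using Finset.induction_on generalizing k with
  | empty =>
    cases k with
    | zero =>
      haveI : Unique {P : Finpartition (∅ : Finset α) // P.parts.card = 0} :=
        { default := ⟨(Finpartition.empty (Finset α)).copy Finset.bot_eq_empty, by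
            simp [Finpartition.empty]⟩
          uniq := fun ⟨P, hP⟩ => by
            apply Subtype.ext
            apply Finpartition.ext
            rw [Finset.card_eq_zero.1 hP]
            show _ = (Finpartition.empty (Finset α)).parts
            rfl }
      rw [Finset.card_empty]
      show _ = 1
      exact Nat.card_unique
    | succ k =>
      haveI : IsEmpty {P : Finpartition (∅ : Finset α) // P.parts.card = k + 1} := by
        constructor
        rintro ⟨P, hP⟩
        rw [Finpartition.parts_eq_empty_iff.2 rfl] at hP
        simp at hP
      simp [Nat.card_of_isEmpty, stirling]
  | @insert a s ha ih =>
    cases k with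
    | zero =>
      haveI : IsEmpty {P : Finpartition (insert a s) // P.parts.card = 0} := by
        constructor
        rintro ⟨P, hP⟩
        rw [Finset.card_eq_zero] at hP
        have := Finpartition.parts_eq_empty_iff.1 hP
        exact absurd this (by simp [Finset.insert_ne_empty])
      rw [Nat.card_of_isEmpty, Finset.card_insert_of_notMem ha]
      rfl
    | succ k =>
      rw [Nat.card_congr (stepEquiv a s ha k), Nat.card_sum,
        Finset.card_insert_of_notMem ha]
      have e2 : (Σ _Q : {Q : Finpartition s // Q.parts.card = k + 1},
          {p : Finset α // p ∈ _Q.1.parts}) ≃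
          {Q : Finpartition s // Q.parts.card = k + 1} × Fin (k + 1) :=
        (Equiv.sigmaCongrRight fun Q => Q.1.parts.equivFin.trans (finCongr Q.2)).trans
          (Equiv.sigmaEquivProd _ _)
      rw [Nat.card_congr e2, Nat.card_prod, ih, ih, Nat.card_eq_fintype_card,
        Fintype.card_fin]
      show _ = stirling (s.card + 1) (k + 1)
      rw [stirling]
      ring

section PartB
variable {ι : Type*} [Fintype ι] [DecidableEq ι] {β : ι → Type*}
  [∀ i, Fintype (β i)] [∀ i, DecidableEq (β i)]

/-- Monochromatic partitions: every part lies within one block. -/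
def MonoParts (P : Finpartition (univ : Finset (Σ i, β i))) : Prop :=
  ∀ p ∈ P.parts, ∀ x ∈ p, ∀ y ∈ p, x.1 = y.1

/-- The parts of `P` all of whose elements lie in block `i`. -/
def colorSet (P : Finpartition (univ : Finset (Σ i, β i))) (i : ι) :
    Finset (Finset (Σ i, β i)) :=
  P.parts.filter (fun p => ∀ x ∈ p, x.1 = i)

lemma sigmaMk_injOn (i : ι) (p : Finset (Σ i, β i)) :
    Set.InjOn (Sigma.mk i) (Sigma.mk i ⁻¹' (p : Set (Σ i, β i))) :=
  fun x _ y _ h => sigma_mk_injective h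

/-- Restrict a partition to block `i`. -/
noncomputable def splitPart (P : Finpartition (univ : Finset (Σ i, β i))) (i : ι) :
    Finset (Finset (β i)) :=
  (colorSet P i).image (fun p => p.preimage (Sigma.mk i) (sigmaMk_injOn i p))

lemma map_preimage_mono {i : ι} {p : Finset (Σ i, β i)} (hmono : ∀ x ∈ p, x.1 = i) :
    (p.preimage (Sigma.mk i) (sigmaMk_injOn i p)).map (Function.Embedding.sigmaMk i) = p := by
  ext ⟨j, b⟩
  simp only [Finset.mem_map, Finset.mem_preimage, Function.Embedding.sigmaMk_apply]
  constructor
  · rintro ⟨c, hc, h⟩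
    exact h ▸ hc
  · intro h
    have hj := hmono _ h
    subst hj
    exact ⟨b, h, rfl⟩

lemma preimage_map_sigma {i : ι} (q : Finset (β i)) :
    (q.map (Function.Embedding.sigmaMk i)).preimage (Sigma.mk i) (sigmaMk_injOn i _) = q := by
  ext b
  simp [Finset.mem_preimage, sigma_mk_injective.eq_iff]

/-- The block-`i` partition induced by a monochromatic partition. -/
noncomputable def splitP (P : Finpartition (univ : Finset (Σ i, β i))) (hm : MonoParts P) (i : ι) :
    Finpartition (univ : Finset (β i)) where
  parts := splitPart P i
  supIndep := by
    rw [Finset.supIndep_iff_pairwiseDisjoint]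
    rintro e he f hf hef
    simp only [splitPart, Finset.mem_coe, Finset.mem_image] at he hf
    obtain ⟨p, hp, rfl⟩ := he
    obtain ⟨q, hq, rfl⟩ := hf
    have hpq : p ≠ q := fun h => hef (by rw [h])
    have hd : Disjoint p q :=
      P.disjoint (Finset.mem_filter.1 hp).1 (Finset.mem_filter.1 hq).1 hpq
    show Disjoint _ _
    rw [Finset.disjoint_left] at hd ⊢
    intro b hb hb'
    simp only [id, Finset.mem_preimage] at hb hb'
    exact hd hb hb'
  sup_parts := by
    ext b
    simp only [Finset.mem_sup, Finset.mem_univ, iff_true]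
    obtain ⟨p, hp, hbp⟩ := P.exists_mem (Finset.mem_univ (⟨i, b⟩ : Σ i, β i))
    refine ⟨p.preimage (Sigma.mk i) (sigmaMk_injOn i p), ?_, ?_⟩
    · exact Finset.mem_image_of_mem _ (Finset.mem_filter.2 ⟨hp, fun x hx =>
        hm p hp x hx ⟨i, b⟩ hbp⟩)
    · exact Finset.mem_preimage.2 hbp
  bot_notMem := by
    intro h
    simp only [Finset.bot_eq_empty, splitPart, Finset.mem_image] at h
    obtain ⟨p, hp, hpe⟩ := h
    obtain ⟨hp', hmono⟩ := Finset.mem_filter.1 hp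
    obtain ⟨⟨j, b⟩, hx⟩ := P.nonempty_of_mem_parts hp'
    have := hmono _ hx
    subst this
    have : b ∈ p.preimage (Sigma.mk j) (sigmaMk_injOn j p) := Finset.mem_preimage.2 hx
    rw [hpe] at this
    exact absurd this (Finset.notMem_empty b)

/-- Combine block partitions into a partition of the sigma type. -/
noncomputable def combineP (f : ∀ i, Finpartition (univ : Finset (β i))) :
    Finpartition (univ : Finset (Σ i, β i)) where
  parts := Finset.univ.biUnion
    (fun i => (f i).parts.image (fun q => q.map (Function.Embedding.sigmaMk i)))
  supIndep := by
    rw [Finset.supIndep_iff_pairwiseDisjoint]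
    rintro e he f' hf hef
    simp only [Finset.mem_coe, Finset.mem_biUnion, Finset.mem_image] at he hf
    obtain ⟨i, -, q, hq, rfl⟩ := he
    obtain ⟨j, -, r, hr, rfl⟩ := hf
    show Disjoint _ _
    rw [Finset.disjoint_left]
    rintro ⟨l, b⟩ hb hb'
    simp only [id, Finset.mem_map, Function.Embedding.sigmaMk_apply] at hb hb'
    obtain ⟨c, hc, hceq⟩ := hb
    obtain ⟨d, hd, hdeq⟩ := hb'
    obtain ⟨hil, hcb⟩ := Sigma.mk.inj_iff.1 hceq
    obtain ⟨hjl, hdb⟩ := Sigma.mk.inj_iff.1 hdeq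
    subst hil
    subst hjl
    have hcd : c = d := eq_of_heq (hcb.trans hdb.symm)
    subst hcd
    have hqr : q ≠ r := fun h => hef (by rw [h])
    exact Finset.disjoint_left.1 ((f _).disjoint hq hr hqr) hc hd
  sup_parts := by
    ext ⟨i, b⟩
    simp only [Finset.mem_sup, Finset.mem_univ, iff_true]
    obtain ⟨q, hq, hbq⟩ := (f i).exists_mem (Finset.mem_univ b)
    exact ⟨q.map (Function.Embedding.sigmaMk i),
      Finset.mem_biUnion.2 ⟨i, Finset.mem_univ i, Finset.mem_image_of_mem _ hq⟩,
      Finset.mem_map_of_mem _ hbq⟩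
  bot_notMem := by
    intro h
    simp only [Finset.bot_eq_empty, Finset.mem_biUnion, Finset.mem_image] at h
    obtain ⟨i, -, q, hq, hqe⟩ := h
    obtain ⟨b, hb⟩ := (f i).nonempty_of_mem_parts hq
    have : (⟨i, b⟩ : Σ i, β i) ∈ q.map (Function.Embedding.sigmaMk i) :=
      Finset.mem_map_of_mem _ hb
    rw [hqe] at this
    exact absurd this (Finset.notMem_empty _)

lemma combineP_mono (f : ∀ i, Finpartition (univ : Finset (β i))) : MonoParts (combineP f) := by
  intro p hp x hx y hy
  simp only [combineP, Finset.mem_biUnion, Finset.mem_image] at hp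
  obtain ⟨i, -, q, hq, rfl⟩ := hp
  simp only [Finset.mem_map, Function.Embedding.sigmaMk_apply] at hx hy
  obtain ⟨c, -, rfl⟩ := hx
  obtain ⟨d, -, rfl⟩ := hy
  rfl

noncomputable def monoEquiv :
    {P : Finpartition (univ : Finset (Σ i, β i)) // MonoParts P} ≃
      (∀ i, Finpartition (univ : Finset (β i))) where
  toFun := fun ⟨P, h⟩ => splitP P h
  invFun := fun f => ⟨combineP f, combineP_mono f⟩
  left_inv := by
    rintro ⟨P, h⟩
    apply Subtype.ext
    apply Finpartition.ext
    show (combineP (splitP P h)).parts = P.parts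
    ext p
    simp only [combineP, Finset.mem_biUnion, Finset.mem_image, Finset.mem_univ, true_and]
    constructor
    · rintro ⟨i, q, hq, rfl⟩
      simp only [splitP, splitPart, Finset.mem_image] at hq
      obtain ⟨p₀, hp₀, rfl⟩ := hq
      obtain ⟨hp₀', hmono⟩ := Finset.mem_filter.1 hp₀
      rw [map_preimage_mono hmono]
      exact hp₀'
    · intro hp
      obtain ⟨x, hx⟩ := P.nonempty_of_mem_parts hp
      have hmono : ∀ y ∈ p, y.1 = x.1 := fun y hy => h p hp y hy x hx
      refine ⟨x.1, p.preimage (Sigma.mk x.1) (sigmaMk_injOn x.1 p), ?_, map_preimage_mono hmono⟩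
      simp only [splitP, splitPart, Finset.mem_image]
      exact ⟨p, Finset.mem_filter.2 ⟨hp, hmono⟩, rfl⟩
  right_inv := by
    intro f
    funext i
    apply Finpartition.ext
    show (splitP (combineP f) (combineP_mono f) i).parts = (f i).parts
    ext q
    simp only [splitP, splitPart, Finset.mem_image, colorSet, Finset.mem_filter]
    constructor
    · rintro ⟨p, ⟨hp, hmono⟩, rfl⟩
      simp only [combineP, Finset.mem_biUnion, Finset.mem_image, Finset.mem_univ, true_and]
        at hp
      obtain ⟨j, r, hr, rfl⟩ := hp
      obtain ⟨b, hb⟩ := (f j).nonempty_of_mem_parts hr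
      have hji : j = i := hmono ⟨j, b⟩ (Finset.mem_map_of_mem _ hb)
      subst hji
      rw [preimage_map_sigma]
      exact hr
    · intro hq
      refine ⟨q.map (Function.Embedding.sigmaMk i), ⟨?_, ?_⟩, preimage_map_sigma q⟩
      · simp only [combineP, Finset.mem_biUnion, Finset.mem_image, Finset.mem_univ, true_and]
        exact ⟨i, q, hq, rfl⟩
      · rintro ⟨j, b⟩ hx
        obtain ⟨c, -, hceq⟩ := Finset.mem_map.1 hx
        exact (Sigma.mk.inj_iff.1 hceq).1.symm

lemma card_parts_eq_sum (P : Finpartition (univ : Finset (Σ i, β i))) (h : MonoParts P) :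
    P.parts.card = ∑ i, (splitP P h i).parts.card := by
  have hinj : ∀ i, ∀ p ∈ colorSet P i, ∀ q ∈ colorSet P i,
      p.preimage (Sigma.mk i) (sigmaMk_injOn i p) =
        q.preimage (Sigma.mk i) (sigmaMk_injOn i q) → p = q := by
    intro i p hp q hq heq
    have hp' := (Finset.mem_filter.1 hp).2
    have hq' := (Finset.mem_filter.1 hq).2
    rw [← map_preimage_mono hp', ← map_preimage_mono hq', heq]
  have hcard : ∀ i, (splitP P h i).parts.card = (colorSet P i).card := fun i =>
    Finset.card_image_of_injOn (hinj i)
  simp only [hcard]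
  have hbi : P.parts = Finset.univ.biUnion (fun i => colorSet P i) := by
    ext p
    simp only [Finset.mem_biUnion, Finset.mem_univ, true_and, colorSet, Finset.mem_filter]
    constructor
    · intro hp
      obtain ⟨x, hx⟩ := P.nonempty_of_mem_parts hp
      exact ⟨x.1, hp, fun y hy => h p hp y hy x hx⟩
    · rintro ⟨i, hp, -⟩
      exact hp
  rw [hbi, Finset.card_biUnion]
  rintro i - j - hij
  show Disjoint (colorSet P i) (colorSet P j)
  rw [Finset.disjoint_left]
  intro p hp hp'
  obtain ⟨x, hx⟩ := P.nonempty_of_mem_parts (Finset.mem_filter.1 hp).1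
  exact hij (((Finset.mem_filter.1 hp).2 x hx).symm.trans ((Finset.mem_filter.1 hp').2 x hx))

end PartB

def pairEquiv {X Y : Type*} (c : X → ℕ) (d : Y → ℕ) (m : ℕ) :
    {t : X × Y // c t.1 + d t.2 = m} ≃
      Σ j : Fin (m + 1), {x : X // c x = j} × {y : Y // d y = m - j} where
  toFun := fun t => ⟨⟨c t.1.1, by have := t.2; omega⟩, ⟨t.1.1, rfl⟩,
    ⟨t.1.2, by simp only [Fin.val_mk]; have := t.2; omega⟩⟩
  invFun := fun ⟨j, ⟨x, hx⟩, ⟨y, hy⟩⟩ =>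
    ⟨(x, y), by show c x + d y = m; have := j.2; omega⟩
  left_inv := fun t => rfl
  right_inv := fun ⟨⟨j, hj⟩, ⟨x, hx⟩, ⟨y, hy⟩⟩ => by
    simp only [Fin.val_mk] at hx
    subst hx
    rfl

lemma card_pair {X Y : Type*} [Finite X] [Finite Y] (c : X → ℕ) (d : Y → ℕ) (m : ℕ) :
    Nat.card {t : X × Y // c t.1 + d t.2 = m} =
      ∑ j ∈ Finset.range (m + 1),
        Nat.card {x : X // c x = j} * Nat.card {y : Y // d y = m - j} := by
  classical
  have := Fintype.ofFinite X
  have := Fintype.ofFinite Y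
  rw [Nat.card_congr (pairEquiv c d m), Nat.card_eq_fintype_card, Fintype.card_sigma,
    Fin.sum_univ_eq_sum_range
      (fun j => Fintype.card ({x : X // c x = j} × {y : Y // d y = m - j}))]
  refine Finset.sum_congr rfl fun j hj => ?_
  rw [Fintype.card_prod, Nat.card_eq_fintype_card, Nat.card_eq_fintype_card]

lemma stirling_zero_right {n : ℕ} (hn : 1 ≤ n) : stirling n 0 = 0 := by
  cases n with
  | zero => omega
  | succ m => rfl

lemma stirling_one_right {n : ℕ} (hn : 1 ≤ n) : stirling n 1 = 1 := by
  induction n with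
  | zero => omega
  | succ m ih =>
    show 1 * stirling m 1 + stirling m 0 = 1
    cases m with
    | zero => rfl
    | succ l => rw [ih (by omega), stirling_zero_right (by omega)]

lemma stirling_two_q {n : ℕ} (hn : 1 ≤ n) : (stirling n 2 : ℚ) = (2 ^ n - 2) / 2 := by
  induction n with
  | zero => omega
  | succ m ih =>
    show ((2 * stirling m 2 + stirling m 1 : ℕ) : ℚ) = _
    cases m with
    | zero => norm_num [stirling]
    | succ l =>
      push_cast [ih (by omega), stirling_one_right (Nat.succ_le_succ (Nat.zero_le l))]
      ring

lemma stirling_three_q {n : ℕ} (hn : 1 ≤ n) :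
    (stirling n 3 : ℚ) = (3 ^ n - 3 * 2 ^ n + 3) / 6 := by
  induction n with
  | zero => omega
  | succ m ih =>
    show ((3 * stirling m 3 + stirling m 2 : ℕ) : ℚ) = _
    cases m with
    | zero => norm_num [stirling]
    | succ l =>
      push_cast [ih (by omega), stirling_two_q (Nat.succ_le_succ (Nat.zero_le l))]
      simp only [Nat.succ_eq_add_one]
      ring

/-- For `n ≥ 1`, the number of proper partitions of the complete tripartite graph
`K_{n,n,n}` into exactly `5` independent sets equals `3·S(n,2)² + 3·S(n,3)`, which equals
`(1/4)·(18 − 18·2^n + 2·3^n + 3·4^n)`. -/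
theorem partitions_completeTripartite_five (n : ℕ) (hn : 1 ≤ n) :
    Nat.card {P : Finpartition (Finset.univ : Finset (Σ _i : Fin 3, Fin n)) //
        (∀ p ∈ P.parts, ∀ a ∈ p, ∀ b ∈ p,
          ¬ (SimpleGraph.completeMultipartiteGraph (fun _i : Fin 3 => Fin n)).Adj a b) ∧
        P.parts.card = 5} =
      3 * stirling n 2 ^ 2 + 3 * stirling n 3 ∧
    (3 * (stirling n 2 : ℚ) ^ 2 + 3 * stirling n 3) =
      (1 / 4) * (18 - 18 * 2 ^ n + 2 * 3 ^ n + 3 * 4 ^ n) := by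
  constructor
  · have e1 : {P : Finpartition (Finset.univ : Finset (Σ _i : Fin 3, Fin n)) //
        (∀ p ∈ P.parts, ∀ a ∈ p, ∀ b ∈ p,
          ¬ (SimpleGraph.completeMultipartiteGraph (fun _i : Fin 3 => Fin n)).Adj a b) ∧
        P.parts.card = 5} ≃
        {P : Finpartition (Finset.univ : Finset (Σ _i : Fin 3, Fin n)) //
          MonoParts P ∧ P.parts.card = 5} :=
      Equiv.subtypeEquivRight (fun P => by
        constructor
        · rintro ⟨h1, h2⟩
          exact ⟨fun p hp x hx y hy => not_ne_iff.1 (h1 p hp x hx y hy), h2⟩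
        · rintro ⟨h1, h2⟩
          exact ⟨fun p hp x hx y hy hadj => hadj (h1 p hp x hx y hy), h2⟩)
    have e2 : {P : Finpartition (Finset.univ : Finset (Σ _i : Fin 3, Fin n)) //
          MonoParts P ∧ P.parts.card = 5} ≃
        {x : {P : Finpartition (Finset.univ : Finset (Σ _i : Fin 3, Fin n)) // MonoParts P} //
          x.1.parts.card = 5} :=
      (Equiv.subtypeSubtypeEquivSubtypeInter _ _).symm
    have e3 : {x : {P : Finpartition (Finset.univ : Finset (Σ _i : Fin 3, Fin n)) //
          MonoParts P} // x.1.parts.card = 5} ≃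
        {f : ∀ _i : Fin 3, Finpartition (Finset.univ : Finset (Fin n)) //
          ∑ i, (f i).parts.card = 5} := by
      refine Equiv.subtypeEquiv monoEquiv (fun x => ?_)
      obtain ⟨P, h⟩ := x
      show P.parts.card = 5 ↔ _
      rw [card_parts_eq_sum P h]
      rfl
    have e4 : {f : ∀ _i : Fin 3, Finpartition (Finset.univ : Finset (Fin n)) //
          ∑ i, (f i).parts.card = 5} ≃
        {t : Finpartition (Finset.univ : Finset (Fin n)) ×
            (Finpartition (Finset.univ : Finset (Fin n)) ×
              Finpartition (Finset.univ : Finset (Fin n))) //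
          t.1.parts.card + (t.2.1.parts.card + t.2.2.parts.card) = 5} :=
      { toFun := fun f => ⟨(f.1 0, f.1 1, f.1 2), by
          show (f.1 0).parts.card + ((f.1 1).parts.card + (f.1 2).parts.card) = 5
          have := f.2
          rw [Fin.sum_univ_three] at this
          omega⟩
        invFun := fun t => ⟨![t.1.1, t.1.2.1, t.1.2.2], by
          rw [Fin.sum_univ_three]
          show t.1.1.parts.card + t.1.2.1.parts.card + t.1.2.2.parts.card = 5
          have := t.2
          omega⟩
        left_inv := fun f => Subtype.ext (funext fun i => by fin_cases i <;> rfl)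
        right_inv := fun t => rfl }
    rw [Nat.card_congr (((e1.trans e2).trans e3).trans e4)]
    have hN : ∀ j, Nat.card {Q : Finpartition (Finset.univ : Finset (Fin n)) //
        Q.parts.card = j} = stirling n j := fun j => by
      have := card_finpartition (Finset.univ : Finset (Fin n)) j
      rwa [Finset.card_fin] at this
    rw [card_pair (X := Finpartition (Finset.univ : Finset (Fin n)))
      (Y := Finpartition (Finset.univ : Finset (Fin n)) ×
        Finpartition (Finset.univ : Finset (Fin n)))
      (fun Q => Q.parts.card) (fun t => t.1.parts.card + t.2.parts.card) 5]
    simp only [card_pair (fun Q : Finpartition (Finset.univ : Finset (Fin n)) =>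
      Q.parts.card) (fun Q : Finpartition (Finset.univ : Finset (Fin n)) => Q.parts.card)]
    simp only [hN]
    simp only [Finset.sum_range_succ, Finset.sum_range_zero,
      stirling_zero_right hn, stirling_one_right hn]
    ring
  · rw [stirling_two_q hn, stirling_three_q hn,
      show (4 : ℚ) ^ n = 2 ^ n * 2 ^ n by rw [show (4 : ℚ) = 2 * 2 by norm_num, mul_pow]]
    field_simp
    ring
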